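/- Suppose u ∈ V satisfies a(u, v) = f(v) for all v ∈ V. Let V_n and V^R be finite-dimensional subspaces of V, let u_n be a Galerkin solution on V_n, and let u^R be a Galerkin solution on V^R. Then the error of the reduced-order solution with respect to the snapshot satisfies ‖u_n − u^R‖_V ≤ (γ/α)(1 + γ/α) ‖u − P_{V_n} u‖_V + (γ/α) ‖u_n − P_{V^R} u_n‖_V. -/

import Mathlib

open scoped RealInnerProductSpace

/-- Orthogonal projection onto a submodule, as a plain function; it equals the usual
orthogonal projection whenever the submodule is finite-dimensional. -/
noncomputable def orthProj {V : Type*} [NormedAddCommGroup V] [InnerProductSpace ℝ V]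
    (K : Submodule ℝ V) (x : V) : V := by
  classical
  exact if h : FiniteDimensional ℝ K then
    haveI := h
    (K.orthogonalProjectionOnto x : V)
  else 0

/-- Céa's lemma: the Galerkin error is bounded by `(γ/α)` times the distance to any
element of the subspace. -/
lemma cea_lemma
    {V : Type*} [NormedAddCommGroup V] [InnerProductSpace ℝ V]
    (a : V →ₗ[ℝ] V →ₗ[ℝ] ℝ) (f : V →ₗ[ℝ] ℝ)
    (α γ : ℝ) (hα : 0 < α) (hγ : 0 ≤ γ)
    (hcoer : ∀ v : V, α * ‖v‖ ^ 2 ≤ a v v)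
    (hcont : ∀ v w : V, |a v w| ≤ γ * ‖v‖ * ‖w‖)
    (u : V) (hu : ∀ v : V, a u v = f v)
    (W : Submodule ℝ V) (uW : V) (hmem : uW ∈ W) (hGal : ∀ w ∈ W, a uW w = f w)
    (q : V) (hq : q ∈ W) :
    ‖u - uW‖ ≤ (γ / α) * ‖u - q‖ := by
  have horth : ∀ v ∈ W, a (u - uW) v = 0 := by
    intro v hv
    simp [map_sub, LinearMap.sub_apply, hu v, hGal v hv]
  have key : a (u - uW) (u - uW) = a (u - uW) (u - q) := by
    have h0 : a (u - uW) (q - uW) = 0 := horth _ (W.sub_mem hq hmem)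
    have hsplit : a (u - uW) (u - uW)
        = a (u - uW) (u - q) + a (u - uW) (q - uW) := by
      have huw : u - uW = (u - q) + (q - uW) := by abel
      calc a (u - uW) (u - uW) = a (u - uW) ((u - q) + (q - uW)) := by rw [← huw]
        _ = a (u - uW) (u - q) + a (u - uW) (q - uW) := map_add _ _ _
    rw [hsplit, h0, add_zero]
  by_cases he : ‖u - uW‖ = 0
  · rw [he]; positivity
  · have he' : 0 < ‖u - uW‖ := lt_of_le_of_ne (norm_nonneg _) (Ne.symm he)
    have h1 : α * ‖u - uW‖ ^ 2 ≤ a (u - uW) (u - uW) := hcoer _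
    have h2 : a (u - uW) (u - q) ≤ γ * ‖u - uW‖ * ‖u - q‖ :=
      le_trans (le_abs_self _) (hcont _ _)
    rw [div_mul_eq_mul_div, le_div_iff₀ hα]
    nlinarith [h1, key, h2, he']

/-- **Error of the reduced-order solution with respect to the snapshot.** `‖u_n - u^R‖ ≤ (γ/α)(1 + γ/α)‖u - P_{V_n} u‖ + (γ/α)‖u_n - P_{V^R} u_n‖`. -/
theorem rom_error_wrt_snapshot
    {V : Type*} [NormedAddCommGroup V] [InnerProductSpace ℝ V]
    (a : V →ₗ[ℝ] V →ₗ[ℝ] ℝ) (f : V →ₗ[ℝ] ℝ)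
    (α γ : ℝ) (hα : 0 < α)
    (hcoer : ∀ v : V, α * ‖v‖ ^ 2 ≤ a v v)
    (hcont : ∀ v w : V, |a v w| ≤ γ * ‖v‖ * ‖w‖)
    (u : V) (hu : ∀ v : V, a u v = f v)
    (Vn VR : Submodule ℝ V) [FiniteDimensional ℝ ↥Vn] [FiniteDimensional ℝ ↥VR]
    (un : V) (hun : un ∈ Vn) (hGaln : ∀ w ∈ Vn, a un w = f w)
    (uR : V) (huR : uR ∈ VR) (hGalR : ∀ w ∈ VR, a uR w = f w) :
    ‖un - uR‖ ≤ (γ / α) * (1 + γ / α) * ‖u - orthProj Vn u‖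
      + (γ / α) * ‖un - orthProj VR un‖ := by
  by_cases hs : ∀ v : V, v = 0
  · simp [hs (un - uR), hs (u - orthProj Vn u), hs (un - orthProj VR un)]
  · push_neg at hs
    obtain ⟨v, hv⟩ := hs
    have hvn : 0 < ‖v‖ := norm_pos_iff.mpr hv
    have hγ : 0 < γ := by
      nlinarith [hcoer v, le_abs_self (a v v), hcont v v, mul_pos hvn hvn]
    have hk : 0 ≤ γ / α := le_of_lt (div_pos hγ hα)
    have hPn : orthProj Vn u = (Vn.orthogonalProjectionOnto u : V) := by
      rw [orthProj, dif_pos ‹FiniteDimensional ℝ ↥Vn›]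
    have hPR : orthProj VR un = (VR.orthogonalProjectionOnto un : V) := by
      rw [orthProj, dif_pos ‹FiniteDimensional ℝ ↥VR›]
    set p := ‖u - orthProj Vn u‖ with hp
    set d := ‖un - orthProj VR un‖ with hd
    have hc : ‖u - un‖ ≤ (γ / α) * p := by
      rw [hp, hPn]
      exact cea_lemma a f α γ hα (le_of_lt hγ) hcoer hcont u hu Vn un hun hGaln
        _ (SetLike.coe_mem _)
    have hr : ‖u - uR‖ ≤ (γ / α) * ‖u - orthProj VR un‖ := by
      rw [hPR]
      exact cea_lemma a f α γ hα (le_of_lt hγ) hcoer hcont u hu VR uR huR hGalR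
        _ (SetLike.coe_mem _)
    have hm : ‖u - orthProj VR un‖ ≤ ‖u - un‖ + d := by
      have : u - orthProj VR un = (u - un) + (un - orthProj VR un) := by abel
      rw [this, hd]
      exact norm_add_le _ _
    have he : ‖un - uR‖ ≤ ‖u - un‖ + ‖u - uR‖ := by
      have : un - uR = -(u - un) + (u - uR) := by abel
      rw [this]
      exact le_trans (norm_add_le _ _) (by rw [norm_neg])
    have h5 : (γ / α) * ‖u - orthProj VR un‖ ≤ (γ / α) * (‖u - un‖ + d) :=
      mul_le_mul_of_nonneg_left hm hk
    have h6 : (γ / α) * ‖u - un‖ ≤ (γ / α) * ((γ / α) * p) :=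
      mul_le_mul_of_nonneg_left hc hk
    nlinarith [hr, he, hc, h5, h6]
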